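/- Let k be a field and A a finite-dimensional commutative ℤ-graded k-algebra, A = ⊕_{d∈ℤ} A_d with 1 ∈ A₀. For nonzero a ∈ A let in(a) denote the nonzero homogeneous component of a of least degree, and for a k-subalgebra B ⊆ A let in(B) = span_k{in(b) : b ∈ B, b ≠ 0}. Then: (1) in(B) is a k-subalgebra of A (it contains 1 and is closed under multiplication); (2) dim_k in(B) = dim_k B; and (3) for every d ∈ ℤ, dim_k((in(B) ∩ F_d)/(in(B) ∩ F_{d+1})) = dim_k((B ∩ F_d)/(B ∩ F_{d+1})), where F_d = ⊕_{e ≥ d} A_e. -/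
import Mathlib

open DirectSum Submodule Module
set_option linter.unusedSectionVars false
section aux
variable {k A : Type*} [Field k] [CommRing A] [Algebra k A]
  (𝒜 : ℤ → Submodule k A) [GradedAlgebra 𝒜]

noncomputable def projL (d : ℤ) : A →ₗ[k] A :=
  (𝒜 d).subtype ∘ₗ (DirectSum.component k ℤ (fun i => ↥(𝒜 i)) d) ∘ₗ
    (DirectSum.decomposeLinearEquiv 𝒜).toLinearMap
theorem projL_apply (d : ℤ) (a : A) : projL 𝒜 d a = (DirectSum.decompose 𝒜 a d : A) := rfl
theorem projL_mem (d : ℤ) (a : A) : projL 𝒜 d a ∈ 𝒜 d := (DirectSum.decompose 𝒜 a d).2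
abbrev FilX (d : ℤ) : Submodule k A := ⨆ e : ℤ, ⨆ _ : d ≤ e, 𝒜 e
theorem A_le_FilX {d e : ℤ} (h : d ≤ e) : 𝒜 e ≤ FilX 𝒜 d :=
  le_iSup₂ (f := fun e _ => 𝒜 e) e h
theorem FilX_antitone {d d' : ℤ} (h : d ≤ d') : FilX 𝒜 d' ≤ FilX 𝒜 d :=
  iSup₂_le fun e he => A_le_FilX 𝒜 (h.trans he)
theorem mem_FilX_iff {d : ℤ} {a : A} :
    a ∈ FilX 𝒜 d ↔ ∀ e < d, projL 𝒜 e a = 0 := by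
  constructor
  · intro ha e he
    have hle : FilX 𝒜 d ≤ LinearMap.ker (projL 𝒜 e) := by
      refine iSup₂_le fun e' he' x hx => ?_
      simp only [LinearMap.mem_ker, projL_apply]
      exact DirectSum.decompose_of_mem_ne 𝒜 hx (by omega)
    exact hle ha
  · intro h
    classical
    rw [← DirectSum.sum_support_decompose 𝒜 a]
    refine Submodule.sum_mem _ fun e he => ?_
    rcases lt_or_ge e d with h' | h'
    · exact absurd (ZeroMemClass.coe_eq_zero.mp (by rw [← projL_apply]; exact h e h'))
        (DFinsupp.mem_support_iff.mp he)
    · exact A_le_FilX 𝒜 h' (DirectSum.decompose 𝒜 a e).2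
theorem FilX_mul_le (d e : ℤ) : FilX 𝒜 d * FilX 𝒜 e ≤ FilX 𝒜 (d + e) := by
  rw [Submodule.iSup_mul]
  refine iSup_le fun i => ?_
  rw [Submodule.iSup_mul]
  refine iSup_le fun hi => ?_
  rw [Submodule.mul_iSup]
  refine iSup_le fun j => ?_
  rw [Submodule.mul_iSup]
  refine iSup_le fun hj => ?_
  exact Submodule.mul_le.mpr fun x hx y hy =>
    A_le_FilX 𝒜 (add_le_add hi hj) (SetLike.mul_mem_graded hx hy)

theorem FilX_mul_mem {d e : ℤ} {a b : A} (ha : a ∈ FilX 𝒜 d) (hb : b ∈ FilX 𝒜 e) :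
    a * b ∈ FilX 𝒜 (d + e) :=
  FilX_mul_le 𝒜 d e (Submodule.mul_mem_mul ha hb)
theorem proj_of_mem_FilX_succ {d : ℤ} {a : A} (ha : a ∈ FilX 𝒜 (d + 1)) :
    projL 𝒜 d a = 0 :=
  (mem_FilX_iff 𝒜).mp ha d (by omega)
theorem sub_proj_mem {d : ℤ} {a : A} (ha : a ∈ FilX 𝒜 d) :
    a - projL 𝒜 d a ∈ FilX 𝒜 (d + 1) := by
  rw [mem_FilX_iff] at ha ⊢
  intro e he
  rw [map_sub]
  rcases eq_or_lt_of_le (Int.lt_add_one_iff.mp he) with rfl | h'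
  · rw [projL_apply 𝒜 e (projL 𝒜 e a),
      DirectSum.decompose_of_mem_same 𝒜 (projL_mem 𝒜 e a), sub_self]
  · rw [ha e h', projL_apply,
      DirectSum.decompose_of_mem_ne 𝒜 (projL_mem 𝒜 d a) (by omega), sub_zero]

def inSub (B : Subalgebra k A) : Submodule k A := Submodule.span k
  {x | ∃ b ∈ B, ∃ d : ℤ, x ∈ 𝒜 d ∧ x ≠ 0 ∧ b - x ∈ FilX 𝒜 (d + 1)}

variable (B : Subalgebra k A)

theorem one_mem_inSub : (1 : A) ∈ inSub 𝒜 B := by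
  by_cases h : (1 : A) = 0
  · exact h ▸ zero_mem _
  · exact subset_span ⟨1, one_mem B, 0, SetLike.one_mem_graded 𝒜, h, by
      rw [sub_self]; exact zero_mem _⟩

theorem mul_mem_inSub : ∀ x ∈ inSub 𝒜 B, ∀ y ∈ inSub 𝒜 B, x * y ∈ inSub 𝒜 B := by
  have hSS : inSub 𝒜 B * inSub 𝒜 B ≤ inSub 𝒜 B := by
    rw [inSub, Submodule.span_mul_span, Submodule.span_le]
    rintro _ ⟨x, hx, y, hy, rfl⟩
    obtain ⟨b, hb, d, hxd, hx0, hbx⟩ := hx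
    obtain ⟨c, hc, e, hye, hy0, hcy⟩ := hy
    show x * y ∈ inSub 𝒜 B
    by_cases h0 : x * y = 0
    · rw [h0]; exact zero_mem _
    · refine subset_span ⟨b * c, mul_mem hb hc, d + e, SetLike.mul_mem_graded hxd hye, h0, ?_⟩
      have hbF : b ∈ FilX 𝒜 d := by
        have hb' : b = x + (b - x) := by ring
        rw [hb']
        exact add_mem (A_le_FilX 𝒜 le_rfl hxd) (FilX_antitone 𝒜 (by omega) hbx)
      have hyF : y ∈ FilX 𝒜 e := A_le_FilX 𝒜 le_rfl hye
      have heq : b * c - x * y = b * (c - y) + (b - x) * y := by ring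
      rw [heq]
      refine add_mem ?_ ?_
      · have := FilX_mul_mem 𝒜 hbF hcy
        rwa [show d + (e + 1) = d + e + 1 by ring] at this
      · have := FilX_mul_mem 𝒜 hbx hyF
        rwa [show d + 1 + e = d + e + 1 by ring] at this
  intro x hx y hy
  exact hSS (Submodule.mul_mem_mul hx hy)


theorem proj_inSub (d : ℤ) : ∀ x ∈ inSub 𝒜 B, projL 𝒜 d x ∈ inSub 𝒜 B := by
  intro x hx
  induction hx using Submodule.span_induction with
  | mem y hy =>
    obtain ⟨b, hb, e, hye, hy0, hby⟩ := hy
    rcases eq_or_ne e d with rfl | hed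
    · rw [projL_apply, DirectSum.decompose_of_mem_same 𝒜 hye]
      exact subset_span ⟨b, hb, e, hye, hy0, hby⟩
    · rw [projL_apply, DirectSum.decompose_of_mem_ne 𝒜 hye hed]
      exact zero_mem _
  | zero => rw [map_zero]; exact zero_mem _
  | add y z _ _ hy hz => rw [map_add]; exact add_mem hy hz
  | smul c y _ hy => rw [map_smul]; exact smul_mem _ c hy

theorem map_B_inf_FilX (d : ℤ) :
    Submodule.map (projL 𝒜 d) (Subalgebra.toSubmodule B ⊓ FilX 𝒜 d) = inSub 𝒜 B ⊓ 𝒜 d := by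
  apply le_antisymm
  · rintro _ ⟨b, ⟨hbB, hbF⟩, rfl⟩
    refine ⟨?_, projL_mem 𝒜 d b⟩
    by_cases h0 : projL 𝒜 d b = 0
    · rw [h0]; exact zero_mem _
    · exact subset_span ⟨b, hbB, d, projL_mem 𝒜 d b, h0, sub_proj_mem 𝒜 hbF⟩
  · rintro x ⟨hx, hxd⟩
    have key : inSub 𝒜 B ≤ Submodule.comap (projL 𝒜 d)
        (Submodule.map (projL 𝒜 d) (Subalgebra.toSubmodule B ⊓ FilX 𝒜 d)) := by
      rw [inSub, Submodule.span_le]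
      rintro y ⟨b, hbB, e, hye, hy0, hby⟩
      simp only [SetLike.mem_coe, Submodule.mem_comap]
      rcases eq_or_ne e d with rfl | hed
      · have hbF : b ∈ FilX 𝒜 e := by
          have hb' : b = y + (b - y) := by ring
          rw [hb']
          exact add_mem (A_le_FilX 𝒜 le_rfl hye) (FilX_antitone 𝒜 (by omega) hby)
        have h1 : projL 𝒜 e y = y := by
          rw [projL_apply, DirectSum.decompose_of_mem_same 𝒜 hye]
        have h2 : projL 𝒜 e b = projL 𝒜 e y := by
          have hb' : b = y + (b - y) := by ring
          rw [hb', map_add, proj_of_mem_FilX_succ 𝒜 hby, add_zero]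
        exact ⟨b, ⟨hbB, hbF⟩, h2⟩
      · rw [projL_apply, DirectSum.decompose_of_mem_ne 𝒜 hye hed]
        exact zero_mem _
    have h := key hx
    rw [Submodule.mem_comap] at h
    rwa [projL_apply, DirectSum.decompose_of_mem_same 𝒜 hxd] at h

theorem map_inSub_inf_FilX (d : ℤ) :
    Submodule.map (projL 𝒜 d) (inSub 𝒜 B ⊓ FilX 𝒜 d) = inSub 𝒜 B ⊓ 𝒜 d := by
  apply le_antisymm
  · rintro _ ⟨x, ⟨hx, _⟩, rfl⟩
    exact ⟨proj_inSub 𝒜 B d x hx, projL_mem 𝒜 d x⟩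
  · rintro x ⟨hx, hxd⟩
    exact ⟨x, ⟨hx, A_le_FilX 𝒜 le_rfl hxd⟩, by
      rw [projL_apply, DirectSum.decompose_of_mem_same 𝒜 hxd]⟩

theorem finrank_inf_FilX [FiniteDimensional k A] (W : Submodule k A) (d : ℤ) :
    finrank k ↥(W ⊓ FilX 𝒜 d)
      = finrank k ↥(Submodule.map (projL 𝒜 d) (W ⊓ FilX 𝒜 d))
        + finrank k ↥(W ⊓ FilX 𝒜 (d + 1)) := by
  set φ := (projL 𝒜 d).comp (W ⊓ FilX 𝒜 d).subtype with hφ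
  have hrange : LinearMap.range φ = Submodule.map (projL 𝒜 d) (W ⊓ FilX 𝒜 d) := by
    rw [hφ, LinearMap.range_comp, Submodule.range_subtype]
  have hker : LinearMap.ker φ
      = Submodule.comap (W ⊓ FilX 𝒜 d).subtype (W ⊓ FilX 𝒜 (d + 1)) := by
    ext s
    obtain ⟨s, hs⟩ := s
    have hsW : s ∈ W := hs.1
    have hsF : s ∈ FilX 𝒜 d := hs.2
    simp only [LinearMap.mem_ker, hφ, LinearMap.comp_apply, Submodule.mem_comap,
      Submodule.subtype_apply, Submodule.mem_inf]
    constructor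
    · intro h
      refine ⟨hsW, ?_⟩
      rw [mem_FilX_iff] at hsF ⊢
      intro e he
      rcases eq_or_lt_of_le (Int.lt_add_one_iff.mp he) with rfl | h'
      · exact h
      · exact hsF e h'
    · rintro ⟨-, h⟩
      exact (mem_FilX_iff 𝒜).mp h d (by omega)
  have hrn := LinearMap.finrank_range_add_finrank_ker φ
  rw [hrange, hker] at hrn
  rw [← hrn]
  congr 1
  exact (Submodule.comapSubtypeEquivOfLe
    (inf_le_inf_left W (FilX_antitone 𝒜 (lt_add_one d).le))).finrank_eq

theorem step_eq [FiniteDimensional k A] (d : ℤ) :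
    finrank k ↥(inSub 𝒜 B ⊓ FilX 𝒜 d)
        + finrank k ↥(Subalgebra.toSubmodule B ⊓ FilX 𝒜 (d + 1))
      = finrank k ↥(Subalgebra.toSubmodule B ⊓ FilX 𝒜 d)
        + finrank k ↥(inSub 𝒜 B ⊓ FilX 𝒜 (d + 1)) := by
  have h1 := finrank_inf_FilX 𝒜 (inSub 𝒜 B) d
  have h2 := finrank_inf_FilX 𝒜 (Subalgebra.toSubmodule B) d
  rw [map_inSub_inf_FilX] at h1
  rw [map_B_inf_FilX] at h2
  omega


theorem exists_bounds [FiniteDimensional k A] :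
    ∃ M N : ℤ, M ≤ N ∧ FilX 𝒜 M = ⊤ ∧ FilX 𝒜 N = ⊥ := by
  classical
  have btop : ⨆ e : ℤ, 𝒜 e = ⊤ :=
    (DirectSum.Decomposition.isInternal 𝒜).submodule_iSup_eq_top
  set bs := Module.finBasis k A with hbs
  set T : Finset ℤ :=
    Finset.univ.biUnion (fun i => (DirectSum.decompose 𝒜 (bs i)).support) with hT
  have hbot : ∀ e ∉ T, 𝒜 e = ⊥ := by
    intro e he
    have hk : ⊤ ≤ LinearMap.ker (projL 𝒜 e) := by
      rw [← bs.span_eq, Submodule.span_le]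
      rintro _ ⟨i, rfl⟩
      simp only [SetLike.mem_coe, LinearMap.mem_ker, projL_apply]
      have hi : e ∉ (DirectSum.decompose 𝒜 (bs i)).support := fun h =>
        he (Finset.mem_biUnion.mpr ⟨i, Finset.mem_univ i, h⟩)
      rw [DFinsupp.notMem_support_iff.mp hi]
      rfl
    rw [Submodule.eq_bot_iff]
    intro x hx
    have h0 : projL 𝒜 e x = 0 := hk Submodule.mem_top
    rw [projL_apply, DirectSum.decompose_of_mem_same 𝒜 hx] at h0
    exact h0
  rcases T.eq_empty_or_nonempty with hTe | hTn
  · have hbb : (⊤ : Submodule k A) = ⊥ := by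
      rw [← btop]
      refine le_antisymm (iSup_le fun e => ?_) bot_le
      rw [hbot e (by simp [hTe])]
    have hall : ∀ d, FilX 𝒜 d = ⊥ := fun d => le_antisymm (le_top.trans hbb.le) bot_le
    exact ⟨0, 0, le_rfl, le_antisymm le_top (by rw [hbb]; exact bot_le), hall 0⟩
  · refine ⟨T.min' hTn, T.max' hTn + 1,
      by have := T.min'_le _ (T.max'_mem hTn); omega, ?_, ?_⟩
    · rw [eq_top_iff, ← btop]
      refine iSup_le fun e => ?_
      by_cases he : e ∈ T
      · exact A_le_FilX 𝒜 (T.min'_le e he)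
      · rw [hbot e he]; exact bot_le
    · rw [eq_bot_iff]
      refine iSup₂_le fun e he => ?_
      have hni : e ∉ T := fun h => by have := T.le_max' e h; omega
      rw [hbot e hni]

theorem finranks_eq [FiniteDimensional k A] :
    finrank k ↥(inSub 𝒜 B) = finrank k ↥B := by
  obtain ⟨M, N, hMN, hM, hN⟩ := exists_bounds 𝒜
  have key : ∀ j : ℕ, ∀ d : ℤ, d + j = N →
      finrank k ↥(inSub 𝒜 B ⊓ FilX 𝒜 d)
        = finrank k ↥(Subalgebra.toSubmodule B ⊓ FilX 𝒜 d) := by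
    intro j
    induction j with
    | zero =>
      intro d hd
      have hd' : d = N := by omega
      subst hd'
      rw [hN, inf_bot_eq, inf_bot_eq]
    | succ n ih =>
      intro d hd
      have hs := step_eq 𝒜 B d
      have hih := ih (d + 1) (by push_cast at hd ⊢; omega)
      omega
  have hMfin := key (N - M).toNat M (by rw [Int.toNat_of_nonneg (by omega)]; omega)
  rw [hM, inf_top_eq, inf_top_eq] at hMfin
  rw [hMfin]
  rfl

end aux

/-- for a finite-dimensional commutative ℤ-graded `k`-algebra `A` and a
subalgebra `B ⊆ A`, the span `in(B)` of the lowest-degree homogeneous components of the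
nonzero elements of `B` is a subalgebra of the same dimension as `B`, with the same
vanishing sequence with respect to the filtration `F_d = ⊕_{e ≥ d} A_e` (the latter stated
as the equality of rank differences `dim(W ∩ F_d) - dim(W ∩ F_{d+1})` for `W = in(B), B`). -/
theorem initial_subalgebra_graded
    {k A : Type*} [Field k] [CommRing A] [Algebra k A] [FiniteDimensional k A]
    (𝒜 : ℤ → Submodule k A) [GradedAlgebra 𝒜] (B : Subalgebra k A) :
    let Fil : ℤ → Submodule k A := fun d => ⨆ e : ℤ, ⨆ _ : d ≤ e, 𝒜 e
    let inB : Submodule k A := Submodule.span k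
      {x | ∃ b ∈ B, ∃ d : ℤ, x ∈ 𝒜 d ∧ x ≠ 0 ∧ b - x ∈ Fil (d + 1)}
    ((1 : A) ∈ inB ∧ ∀ x ∈ inB, ∀ y ∈ inB, x * y ∈ inB) ∧
    Module.finrank k ↥inB = Module.finrank k ↥B ∧
    (∀ d : ℤ,
      Module.finrank k ↥(inB ⊓ Fil d)
          + Module.finrank k ↥(Subalgebra.toSubmodule B ⊓ Fil (d + 1))
        = Module.finrank k ↥(Subalgebra.toSubmodule B ⊓ Fil d)
          + Module.finrank k ↥(inB ⊓ Fil (d + 1))) := by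
  intro Fil inB
  exact ⟨⟨one_mem_inSub 𝒜 B, mul_mem_inSub 𝒜 B⟩, finranks_eq 𝒜 B, step_eq 𝒜 B⟩
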